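/- For σ ∈ ℂ with Re σ sufficiently large (e.g. 2 Re σ > n + 2), the integral T₂(σ) = ∫₀^∞ ∫_{ℝⁿ} u^{2σ−n} / ((u² + |v|²)^σ (u² + |e₁ − v|²)^σ) dv du converges absolutely. -/

import Mathlib

open MeasureTheory Set Complex

open Metric
open scoped ENNReal Real

lemma aux_ball {n : ℕ} {t : ℝ} (ht0 : 0 < t) (htn : t < n) :
    IntegrableOn (fun v : EuclideanSpace ℝ (Fin n) => ‖v‖ ^ (-t))
      (Metric.closedBall 0 1) := by
  have hmeas : Measurable fun v : EuclideanSpace ℝ (Fin n) => ‖v‖ ^ (-t) := by fun_prop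
  have hnn : ∀ v : EuclideanSpace ℝ (Fin n), 0 ≤ ‖v‖ ^ (-t) := fun v => Real.rpow_nonneg (norm_nonneg v) _
  set ν := (volume : Measure (EuclideanSpace ℝ (Fin n))).restrict (Metric.closedBall 0 1) with hν
  refine ⟨hmeas.aestronglyMeasurable, ?_⟩
  rw [hasFiniteIntegral_iff_ofReal (ae_of_all _ hnn),
    lintegral_eq_lintegral_meas_le ν (ae_of_all _ hnn) hmeas.aemeasurable]
  have hsub : ∀ s : ℝ, 0 < s → {a : EuclideanSpace ℝ (Fin n) | s ≤ ‖a‖ ^ (-t)} ⊆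
      Metric.closedBall 0 (s ^ (-t⁻¹)) := by
    intro s hs a ha
    simp only [mem_setOf_eq] at ha
    rw [mem_closedBall_zero_iff]
    rcases eq_or_ne a 0 with rfl | h0
    · simpa using (Real.rpow_pos_of_pos hs _).le
    · have hna : 0 < ‖a‖ := norm_pos_iff.mpr h0
      have := Real.rpow_le_rpow_of_nonpos hs ha (by simp [ht0.le] : -t⁻¹ ≤ (0:ℝ))
      rwa [← Real.rpow_mul (norm_nonneg a), neg_mul_neg, mul_inv_cancel₀ ht0.ne',
        Real.rpow_one] at this
  have hmB : (volume : Measure (EuclideanSpace ℝ (Fin n))) (Metric.closedBall 0 1) < ∞ :=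
    measure_closedBall_lt_top
  calc ∫⁻ s in Ioi (0:ℝ), ν {a | s ≤ ‖a‖ ^ (-t)}
      ≤ ∫⁻ s in Ioc (0:ℝ) 1 ∪ Ioi 1, ν {a | s ≤ ‖a‖ ^ (-t)} :=
        lintegral_mono_set Ioi_subset_Ioc_union_Ioi
    _ ≤ (∫⁻ s in Ioc (0:ℝ) 1, ν {a | s ≤ ‖a‖ ^ (-t)}) +
        ∫⁻ s in Ioi (1:ℝ), ν {a | s ≤ ‖a‖ ^ (-t)} := lintegral_union_le _ _ _
    _ < ∞ := by
        refine ENNReal.add_lt_top.2 ⟨?_, ?_⟩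
        · refine lt_of_le_of_lt (setLIntegral_mono' measurableSet_Ioc
            (fun s _ => (measure_mono (subset_univ _)))) ?_
          rw [setLIntegral_const]
          refine ENNReal.mul_lt_top ?_ (by simp)
          rwa [hν, Measure.restrict_apply_univ]
        · have hb : ∀ s ∈ Ioi (1:ℝ), ν {a | s ≤ ‖a‖ ^ (-t)} ≤
              ENNReal.ofReal (s ^ ((-t⁻¹) * n)) * volume (Metric.closedBall (0 : EuclideanSpace ℝ (Fin n)) 1) := by
            intro s hs
            have hs0 : (0:ℝ) < s := lt_trans one_pos hs
            refine le_trans (le_trans (Measure.restrict_le_self _)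
              (measure_mono (hsub s hs0))) ?_
            rw [Measure.addHaar_closedBall _ _ (Real.rpow_nonneg hs0.le _),
              finrank_euclideanSpace_fin, ← Real.rpow_natCast (s ^ (-t⁻¹)),
              ← Real.rpow_mul hs0.le]
            exact mul_le_mul_right (measure_mono ball_subset_closedBall) _
          refine lt_of_le_of_lt (setLIntegral_mono' measurableSet_Ioi hb) ?_
          rw [lintegral_mul_const' _ _ hmB.ne]
          refine ENNReal.mul_lt_top ?_ hmB
          refine IntegrableOn.setLIntegral_lt_top ?_
          refine integrableOn_Ioi_rpow_of_lt ?_ one_pos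
          have h1 : (1:ℝ) < t⁻¹ * n := by
            rw [inv_mul_eq_div]
            exact (one_lt_div ht0).mpr htn
          nlinarith

lemma aux_compl {n : ℕ} {t : ℝ} (htn : (n : ℝ) < t) :
    IntegrableOn (fun v : EuclideanSpace ℝ (Fin n) => ‖v‖ ^ (-t))
      {v | 1 ≤ ‖v‖} := by
  have ht0 : 0 < t := lt_of_le_of_lt (Nat.cast_nonneg n) htn
  have hS : MeasurableSet {v : EuclideanSpace ℝ (Fin n) | 1 ≤ ‖v‖} :=
    measurableSet_le measurable_const measurable_norm
  have hint : Integrable (fun v : EuclideanSpace ℝ (Fin n) => 2 ^ t * (1 + ‖v‖) ^ (-t)) :=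
    (integrable_one_add_norm (by rw [finrank_euclideanSpace_fin]; exact htn)).const_mul _
  refine (hint.restrict (s := {v | 1 ≤ ‖v‖})).mono'
    (Measurable.aestronglyMeasurable (by fun_prop)) ?_
  filter_upwards [ae_restrict_mem hS] with v hv
  have hv1 : (1:ℝ) ≤ ‖v‖ := hv
  have hv0 : (0:ℝ) < ‖v‖ := lt_of_lt_of_le one_pos hv1
  have h1 : (1 + ‖v‖) ^ t ≤ 2 ^ t * ‖v‖ ^ t := by
    rw [← Real.mul_rpow (by norm_num) (norm_nonneg v)]
    exact Real.rpow_le_rpow (by positivity) (by linarith) ht0.le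
  rw [Real.norm_eq_abs, _root_.abs_of_nonneg (Real.rpow_nonneg (norm_nonneg v) _),
    Real.rpow_neg (norm_nonneg v), Real.rpow_neg (by positivity)]
  have h2 : (0:ℝ) < (2:ℝ) ^ t := by positivity
  calc (‖v‖ ^ t)⁻¹ = 2 ^ t * (2 ^ t * ‖v‖ ^ t)⁻¹ := by
        rw [mul_inv, ← mul_assoc, mul_inv_cancel₀ h2.ne', one_mul]
    _ ≤ 2 ^ t * ((1 + ‖v‖) ^ t)⁻¹ := by
        refine mul_le_mul_of_nonneg_left ?_ h2.le
        exact inv_anti₀ (by positivity) h1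

lemma norm_form {u : ℝ} (hu : 0 < u) (σ : ℂ) (n : ℕ) {x y : ℝ} (hx : 0 ≤ x) (hy : 0 ≤ y) :
    ‖(u : ℂ) ^ (2 * σ - (n : ℂ)) / (((u ^ 2 + x : ℝ) : ℂ) ^ σ * ((u ^ 2 + y : ℝ) : ℂ) ^ σ)‖
      = u ^ (2 * σ.re - n) / ((u ^ 2 + x) ^ σ.re * (u ^ 2 + y) ^ σ.re) := by
  have h1 : (0:ℝ) < u ^ 2 + x := by positivity
  have h2 : (0:ℝ) < u ^ 2 + y := by positivity
  rw [norm_div, norm_mul,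
    Complex.norm_cpow_eq_rpow_re_of_pos hu, Complex.norm_cpow_eq_rpow_re_of_pos h1,
    Complex.norm_cpow_eq_rpow_re_of_pos h2]
  have : (2 * σ - (n : ℂ)).re = 2 * σ.re - n := by simp
  rw [this]

lemma contOn {n : ℕ} (σ : ℂ) (e : EuclideanSpace ℝ (Fin n)) :
    ContinuousOn (fun p : ℝ × EuclideanSpace ℝ (Fin n) =>
      (p.1 : ℂ) ^ (2 * σ - (n : ℂ)) /
        (((p.1 ^ 2 + ‖p.2‖ ^ 2 : ℝ) : ℂ) ^ σ *
          ((p.1 ^ 2 + ‖e - p.2‖ ^ 2 : ℝ) : ℂ) ^ σ))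
      {p | 0 < p.1} := by
  intro p hp
  have hp1 : (0:ℝ) < p.1 := hp
  have h1 : (0:ℝ) < p.1 ^ 2 + ‖p.2‖ ^ 2 := by positivity
  have h2 : (0:ℝ) < p.1 ^ 2 + ‖e - p.2‖ ^ 2 := by positivity
  apply ContinuousAt.continuousWithinAt
  have cb1 : ContinuousAt (fun q : ℝ × EuclideanSpace ℝ (Fin n) => ((q.1 : ℂ))) p :=
    (Complex.continuous_ofReal.comp continuous_fst).continuousAt
  have cb2 : ContinuousAt (fun q : ℝ × EuclideanSpace ℝ (Fin n) =>
      ((q.1 ^ 2 + ‖q.2‖ ^ 2 : ℝ) : ℂ)) p := by fun_prop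
  have cb3 : ContinuousAt (fun q : ℝ × EuclideanSpace ℝ (Fin n) =>
      ((q.1 ^ 2 + ‖e - q.2‖ ^ 2 : ℝ) : ℂ)) p := by fun_prop
  have m1 : ((p.1 : ℂ)) ∈ Complex.slitPlane := Or.inl (by simpa using hp1)
  have m2 : (((p.1 ^ 2 + ‖p.2‖ ^ 2 : ℝ)) : ℂ) ∈ Complex.slitPlane := Or.inl (by rw [Complex.ofReal_re]; exact h1)
  have m3 : (((p.1 ^ 2 + ‖e - p.2‖ ^ 2 : ℝ)) : ℂ) ∈ Complex.slitPlane := Or.inl (by rw [Complex.ofReal_re]; exact h2)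
  refine ContinuousAt.div ?_ (ContinuousAt.mul ?_ ?_) ?_
  · exact ContinuousAt.cpow cb1 continuousAt_const m1
  · exact ContinuousAt.cpow cb2 continuousAt_const m2
  · exact ContinuousAt.cpow cb3 continuousAt_const m3
  · apply mul_ne_zero <;>
    · rw [Ne, Complex.cpow_eq_zero_iff]
      push_neg
      intro h
      exfalso
      rw [Complex.ofReal_eq_zero] at h
      first
      | exact h1.ne' h
      | exact h2.ne' h

lemma rpow_prod_le {x y b c : ℝ} (hx : 0 ≤ x) (hy : 0 ≤ y) (hxy : 0 < x + y)
    (hb : 0 ≤ b) (hc : 0 ≤ c) : x ^ b * y ^ c ≤ (x + y) ^ (b + c) := by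
  rw [Real.rpow_add hxy]
  have e1 : x ^ b ≤ (x + y) ^ b := Real.rpow_le_rpow hx (le_add_of_nonneg_right hy) hb
  have e2 : y ^ c ≤ (x + y) ^ c := Real.rpow_le_rpow hy (le_add_of_nonneg_left hx) hc
  exact mul_le_mul e1 e2 (Real.rpow_nonneg hy c) (Real.rpow_nonneg hxy.le b)

lemma partA {n : ℕ} (hn : 1 ≤ n) (σ : ℂ) (e : EuclideanSpace ℝ (Fin n)) (hσ : (n : ℝ) + 2 < 2 * σ.re) :
    IntegrableOn
      (fun p : ℝ × EuclideanSpace ℝ (Fin n) =>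
        (p.1 : ℂ) ^ (2 * σ - (n : ℂ)) /
          (((p.1 ^ 2 + ‖p.2‖ ^ 2 : ℝ) : ℂ) ^ σ *
            ((p.1 ^ 2 + ‖e - p.2‖ ^ 2 : ℝ) : ℂ) ^ σ))
      (Ici (1 : ℝ) ×ˢ (univ : Set (EuclideanSpace ℝ (Fin n)))) := by
  set a : ℝ := σ.re with ha
  have hn0 : (0:ℝ) ≤ n := Nat.cast_nonneg n
  have hn1 : (1:ℝ) ≤ n := Nat.one_le_cast.mpr hn
  have ha1 : (1:ℝ) < a := by linarith
  -- the dominating product function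
  have hF : IntegrableOn (fun u : ℝ => u ^ (-((n:ℝ) + 1))) (Ici 1) := by
    rw [integrableOn_Ici_iff_integrableOn_Ioi]
    exact integrableOn_Ioi_rpow_of_lt (by linarith) one_pos
  have hG : Integrable (fun v : EuclideanSpace ℝ (Fin n) =>
      ((1:ℝ) + ‖v‖ ^ 2) ^ (-(2 * a - 1) / 2)) :=
    integrable_rpow_neg_one_add_norm_sq (by rw [finrank_euclideanSpace_fin]; linarith)
  have hmeq : (volume : Measure (ℝ × EuclideanSpace ℝ (Fin n))).restrict
      (Ici (1:ℝ) ×ˢ (univ : Set (EuclideanSpace ℝ (Fin n)))) =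
      (volume.restrict (Ici (1:ℝ))).prod volume := by
    rw [Measure.volume_eq_prod, ← Measure.prod_restrict, Measure.restrict_univ]
  have hFG : Integrable (fun p : ℝ × EuclideanSpace ℝ (Fin n) =>
      p.1 ^ (-((n:ℝ) + 1)) * ((1:ℝ) + ‖p.2‖ ^ 2) ^ (-(2 * a - 1) / 2))
      (volume.restrict (Ici (1:ℝ) ×ˢ (univ : Set (EuclideanSpace ℝ (Fin n))))) := by
    rw [hmeq]; exact Integrable.mul_prod hF hG
  have haesm : AEStronglyMeasurable
      (fun p : ℝ × EuclideanSpace ℝ (Fin n) =>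
        (p.1 : ℂ) ^ (2 * σ - (n : ℂ)) /
          (((p.1 ^ 2 + ‖p.2‖ ^ 2 : ℝ) : ℂ) ^ σ *
            ((p.1 ^ 2 + ‖e - p.2‖ ^ 2 : ℝ) : ℂ) ^ σ))
      (volume.restrict (Ici (1:ℝ) ×ˢ (univ : Set (EuclideanSpace ℝ (Fin n))))) := by
    have hopen : IsOpen {p : ℝ × EuclideanSpace ℝ (Fin n) | 0 < p.1} :=
      isOpen_lt continuous_const continuous_fst
    refine AEStronglyMeasurable.mono_set ?_ ((contOn σ e).aestronglyMeasurable hopen.measurableSet)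
    rintro ⟨u, v⟩ ⟨hu, -⟩
    exact lt_of_lt_of_le one_pos (show (1:ℝ) ≤ u from hu)
  refine hFG.mono' haesm ?_
  filter_upwards [ae_restrict_mem (measurableSet_Ici.prod MeasurableSet.univ)] with p hp
  obtain ⟨hu1, -⟩ := hp
  have hu1 : (1:ℝ) ≤ p.1 := hu1
  have hu0 : (0:ℝ) < p.1 := lt_of_lt_of_le one_pos hu1
  set u := p.1
  set r2 := ‖p.2‖ ^ 2 with hr2
  set s2 := ‖e - p.2‖ ^ 2 with hs2
  have hr2' : (0:ℝ) ≤ r2 := sq_nonneg _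
  have hs2' : (0:ℝ) ≤ s2 := sq_nonneg _
  have hX : (0:ℝ) < u ^ 2 + r2 := by positivity
  have hY : (0:ℝ) < u ^ 2 + s2 := by positivity
  rw [norm_form hu0 σ n hr2' hs2', ← ha]
  set Z := ((1:ℝ) + r2) ^ ((2 * a - 1) / 2) with hZ
  have hZ0 : (0:ℝ) < Z := Real.rpow_pos_of_pos (by positivity) _
  have hsq : ((u:ℝ) ^ 2) ^ ((1:ℝ)/2) = u := by
    rw [← Real.rpow_natCast u 2, ← Real.rpow_mul hu0.le]
    norm_num
  have e1 : u * Z ≤ (u ^ 2 + r2) ^ a := by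
    have split : (u ^ 2 + r2) ^ a
        = (u ^ 2 + r2) ^ ((1:ℝ)/2) * (u ^ 2 + r2) ^ ((2 * a - 1)/2) := by
      rw [← Real.rpow_add hX]
      congr 1
      ring
    rw [split]
    refine mul_le_mul ?_ ?_ hZ0.le (Real.rpow_nonneg hX.le _)
    · calc u = ((u:ℝ) ^ 2) ^ ((1:ℝ)/2) := hsq.symm
        _ ≤ (u ^ 2 + r2) ^ ((1:ℝ)/2) :=
          Real.rpow_le_rpow (by positivity) (le_add_of_nonneg_right hr2') (by norm_num)
    · refine Real.rpow_le_rpow (by positivity) ?_ (by linarith)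
      nlinarith
  have e2 : u ^ (2 * a) ≤ (u ^ 2 + s2) ^ a := by
    have : ((u:ℝ) ^ 2) ^ a = u ^ (2 * a) := by
      rw [← Real.rpow_natCast u 2, ← Real.rpow_mul hu0.le]
      norm_num
    rw [← this]
    exact Real.rpow_le_rpow (by positivity) (le_add_of_nonneg_right hs2') (by linarith)
  have k1 : u ^ (2 * a + 1) * Z ≤ (u ^ 2 + r2) ^ a * (u ^ 2 + s2) ^ a := by
    have : u ^ (2 * a + 1) * Z = (u * Z) * u ^ (2 * a) := by
      rw [Real.rpow_add hu0, Real.rpow_one]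
      ring
    rw [this]
    exact mul_le_mul e1 e2 (Real.rpow_nonneg hu0.le _) (by positivity)
  have key : u ^ (2 * a - n) / ((u ^ 2 + r2) ^ a * (u ^ 2 + s2) ^ a)
      ≤ u ^ (2 * a - n) / (u ^ (2 * a + 1) * Z) := by
    exact div_le_div_of_nonneg_left (Real.rpow_pos_of_pos hu0 _).le (by positivity) k1
  refine le_trans key (le_of_eq ?_)
  rw [div_mul_eq_div_div, ← Real.rpow_sub hu0, hZ, div_eq_mul_inv,
    ← Real.rpow_neg (by positivity : (0:ℝ) ≤ (1:ℝ) + r2)]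
  have hexp : 2 * a - ↑n - (2 * a + 1) = -((n:ℝ) + 1) := by ring
  have hexp2 : -((2 * a - 1) / 2) = -(2 * a - 1) / 2 := by ring
  rw [hexp, hexp2]

lemma sq_rpow {x : ℝ} (hx : 0 ≤ x) (b : ℝ) : (x ^ 2) ^ b = x ^ (2 * b) := by
  rw [← Real.rpow_natCast x 2, ← Real.rpow_mul hx]
  norm_num

lemma coreB {n : ℕ} (hn : 1 ≤ n) {a u r s : ℝ} (hσ : (n : ℝ) + 2 < 2 * a)
    (hu0 : 0 < u) (hr : 0 < r) (hs : 1 / 2 ≤ s) :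
    u ^ (2 * a - n) / ((u ^ 2 + r ^ 2) ^ a * (u ^ 2 + s ^ 2) ^ a) ≤
      4 ^ a * (u ^ (-(1/2) : ℝ) * r ^ (-((n : ℝ) - 1/2))) := by
  have hn1 : (1:ℝ) ≤ n := Nat.one_le_cast.mpr hn
  have ha0 : (0:ℝ) < a := by linarith
  have hD : (0:ℝ) < (u ^ 2 + r ^ 2) ^ a * (u ^ 2 + s ^ 2) ^ a := by positivity
  set b : ℝ := a - ((n : ℝ) - 1/2) / 2 with hb
  set c : ℝ := ((n : ℝ) - 1/2) / 2 with hc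
  have hb0 : 0 ≤ b := by rw [hb]; linarith
  have hc0 : 0 ≤ c := by rw [hc]; linarith
  have A1 : u ^ (2 * a - ((n : ℝ) - 1/2)) * r ^ ((n : ℝ) - 1/2) ≤ (u ^ 2 + r ^ 2) ^ a := by
    have h := rpow_prod_le (sq_nonneg u) (sq_nonneg r) (by positivity) hb0 hc0
    rw [sq_rpow hu0.le, sq_rpow hr.le] at h
    have e1 : 2 * b = 2 * a - ((n : ℝ) - 1/2) := by rw [hb]; ring
    have e2 : 2 * c = (n : ℝ) - 1/2 := by rw [hc]; ring
    have e3 : b + c = a := by rw [hb, hc]; ring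
    rw [← e1, ← e2, ← e3]
    exact h
  have A2 : ((1:ℝ)/4) ^ a ≤ (u ^ 2 + s ^ 2) ^ a := by
    refine Real.rpow_le_rpow (by norm_num) ?_ ha0.le
    nlinarith
  have k : u ^ (2 * a - ((n : ℝ) - 1/2)) * r ^ ((n : ℝ) - 1/2) * ((1:ℝ)/4) ^ a ≤
      (u ^ 2 + r ^ 2) ^ a * (u ^ 2 + s ^ 2) ^ a :=
    mul_le_mul A1 A2 (by positivity) (by positivity)
  rw [div_le_iff₀ hD]
  have c1 : u ^ (-(1/2) : ℝ) * u ^ (2 * a - ((n : ℝ) - 1/2)) = u ^ (2 * a - n) := by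
    rw [← Real.rpow_add hu0]
    congr 1
    ring
  have c2 : r ^ (-((n : ℝ) - 1/2)) * r ^ ((n : ℝ) - 1/2) = 1 := by
    rw [← Real.rpow_add hr]
    simp
  have c3 : (4:ℝ) ^ a * ((1:ℝ)/4) ^ a = 1 := by
    rw [← Real.mul_rpow (by norm_num) (by norm_num)]
    norm_num
  have collapse : 4 ^ a * (u ^ (-(1/2) : ℝ) * r ^ (-((n : ℝ) - 1/2))) *
      (u ^ (2 * a - ((n : ℝ) - 1/2)) * r ^ ((n : ℝ) - 1/2) * ((1:ℝ)/4) ^ a)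
      = u ^ (2 * a - n) := by
    calc 4 ^ a * (u ^ (-(1/2) : ℝ) * r ^ (-((n : ℝ) - 1/2))) *
        (u ^ (2 * a - ((n : ℝ) - 1/2)) * r ^ ((n : ℝ) - 1/2) * ((1:ℝ)/4) ^ a)
        = (u ^ (-(1/2) : ℝ) * u ^ (2 * a - ((n : ℝ) - 1/2))) *
          ((r ^ (-((n : ℝ) - 1/2)) * r ^ ((n : ℝ) - 1/2)) * ((4:ℝ) ^ a * ((1:ℝ)/4) ^ a)) := by
          ring
      _ = u ^ (2 * a - n) := by rw [c1, c2, c3]; ring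
  calc u ^ (2 * a - (n : ℝ)) = 4 ^ a * (u ^ (-(1/2) : ℝ) * r ^ (-((n : ℝ) - 1/2))) *
      (u ^ (2 * a - ((n : ℝ) - 1/2)) * r ^ ((n : ℝ) - 1/2) * ((1:ℝ)/4) ^ a) := collapse.symm
    _ ≤ 4 ^ a * (u ^ (-(1/2) : ℝ) * r ^ (-((n : ℝ) - 1/2))) *
      ((u ^ 2 + r ^ 2) ^ a * (u ^ 2 + s ^ 2) ^ a) :=
        mul_le_mul_of_nonneg_left k (by positivity)

lemma coreC {n : ℕ} (hn : 1 ≤ n) {a u r s : ℝ} (hσ : (n : ℝ) + 2 < 2 * a)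
    (hu0 : 0 < u) (hu1 : u ≤ 1) (hr : 1 ≤ r) (hs : 1 / 2 ≤ s) :
    u ^ (2 * a - n) / ((u ^ 2 + r ^ 2) ^ a * (u ^ 2 + s ^ 2) ^ a) ≤
      4 ^ a * r ^ (-(2 * a)) := by
  have hn1 : (1:ℝ) ≤ n := Nat.one_le_cast.mpr hn
  have ha0 : (0:ℝ) < a := by linarith
  have hr0 : (0:ℝ) < r := lt_of_lt_of_le one_pos hr
  have hD : (0:ℝ) < (u ^ 2 + r ^ 2) ^ a * (u ^ 2 + s ^ 2) ^ a := by positivity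
  have A1 : r ^ (2 * a) ≤ (u ^ 2 + r ^ 2) ^ a := by
    rw [← sq_rpow hr0.le]
    exact Real.rpow_le_rpow (by positivity) (le_add_of_nonneg_left (sq_nonneg u)) ha0.le
  have A2 : ((1:ℝ)/4) ^ a ≤ (u ^ 2 + s ^ 2) ^ a := by
    refine Real.rpow_le_rpow (by norm_num) ?_ ha0.le
    nlinarith
  have k : r ^ (2 * a) * ((1:ℝ)/4) ^ a ≤ (u ^ 2 + r ^ 2) ^ a * (u ^ 2 + s ^ 2) ^ a :=
    mul_le_mul A1 A2 (by positivity) (by positivity)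
  rw [div_le_iff₀ hD]
  have c2 : r ^ (-(2 * a)) * r ^ (2 * a) = 1 := by
    rw [← Real.rpow_add hr0]
    simp
  have c3 : (4:ℝ) ^ a * ((1:ℝ)/4) ^ a = 1 := by
    rw [← Real.mul_rpow (by norm_num) (by norm_num)]
    norm_num
  have hN : u ^ (2 * a - (n:ℝ)) ≤ 1 :=
    Real.rpow_le_one hu0.le hu1 (by linarith)
  calc u ^ (2 * a - (n : ℝ)) ≤ 1 := hN
    _ = 4 ^ a * r ^ (-(2 * a)) * (r ^ (2 * a) * ((1:ℝ)/4) ^ a) := by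
        calc (1:ℝ) = (r ^ (-(2 * a)) * r ^ (2 * a)) * ((4:ℝ) ^ a * ((1:ℝ)/4) ^ a) := by
              rw [c2, c3]; ring
          _ = 4 ^ a * r ^ (-(2 * a)) * (r ^ (2 * a) * ((1:ℝ)/4) ^ a) := by ring
    _ ≤ 4 ^ a * r ^ (-(2 * a)) * ((u ^ 2 + r ^ 2) ^ a * (u ^ 2 + s ^ 2) ^ a) :=
        mul_le_mul_of_nonneg_left k (by positivity)

lemma partB {n : ℕ} (hn : 1 ≤ n) (σ : ℂ) (e : EuclideanSpace ℝ (Fin n)) (he : ‖e‖ = 1)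
    (hσ : (n : ℝ) + 2 < 2 * σ.re) :
    IntegrableOn
      (fun p : ℝ × EuclideanSpace ℝ (Fin n) =>
        (p.1 : ℂ) ^ (2 * σ - (n : ℂ)) /
          (((p.1 ^ 2 + ‖p.2‖ ^ 2 : ℝ) : ℂ) ^ σ *
            ((p.1 ^ 2 + ‖e - p.2‖ ^ 2 : ℝ) : ℂ) ^ σ))
      (Ioo (0 : ℝ) 1 ×ˢ (univ : Set (EuclideanSpace ℝ (Fin n)))) := by
  set a : ℝ := σ.re with ha
  have hn1 : (1:ℝ) ≤ n := Nat.one_le_cast.mpr hn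
  have ha0 : (0:ℝ) < a := by linarith
  set B : EuclideanSpace ℝ (Fin n) → ℝ :=
    indicator (Metric.closedBall 0 1) (fun w => ‖w‖ ^ (-((n : ℝ) - 1/2))) with hBdef
  set C : EuclideanSpace ℝ (Fin n) → ℝ :=
    indicator {w : EuclideanSpace ℝ (Fin n) | 1 ≤ ‖w‖} (fun w => ‖w‖ ^ (-(2 * a))) with hCdef
  have hSmeas : MeasurableSet {w : EuclideanSpace ℝ (Fin n) | 1 ≤ ‖w‖} :=
    measurableSet_le measurable_const measurable_norm
  have hB : Integrable B :=
    (integrable_indicator_iff measurableSet_closedBall).2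
      (aux_ball (by linarith) (by linarith))
  have hC : Integrable C :=
    (integrable_indicator_iff hSmeas).2 (aux_compl (by linarith))
  have hBe : Integrable (fun v => B (e - v)) := (integrable_comp_sub_left B e).2 hB
  have hCe : Integrable (fun v => C (e - v)) := (integrable_comp_sub_left C e).2 hC
  have hFhalf : IntegrableOn (fun u : ℝ => u ^ (-(1/2) : ℝ)) (Ioo 0 1) := by
    have h := intervalIntegral.intervalIntegrable_rpow' (a := 0) (b := 1)
      (r := -(1/2)) (by norm_num)
    exact ((intervalIntegrable_iff_integrableOn_Ioc_of_le zero_le_one).1 h).mono_set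
      Ioo_subset_Ioc_self
  have hFone : IntegrableOn (fun _ : ℝ => (1:ℝ)) (Ioo 0 1) := by
    refine integrableOn_const ?_
    rw [Real.volume_Ioo]
    exact ENNReal.ofReal_ne_top
  have hmeq : (volume : Measure (ℝ × EuclideanSpace ℝ (Fin n))).restrict
      (Ioo (0:ℝ) 1 ×ˢ (univ : Set (EuclideanSpace ℝ (Fin n)))) =
      (volume.restrict (Ioo (0:ℝ) 1)).prod volume := by
    rw [Measure.volume_eq_prod, ← Measure.prod_restrict, Measure.restrict_univ]
  have hg : Integrable (fun p : ℝ × EuclideanSpace ℝ (Fin n) =>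
      4 ^ a * (p.1 ^ (-(1/2) : ℝ) * B p.2 + p.1 ^ (-(1/2) : ℝ) * B (e - p.2)
        + ((1:ℝ) * C p.2 + (1:ℝ) * C (e - p.2))))
      (volume.restrict (Ioo (0:ℝ) 1 ×ˢ (univ : Set (EuclideanSpace ℝ (Fin n))))) := by
    rw [hmeq]
    exact (((Integrable.mul_prod hFhalf hB).add (Integrable.mul_prod hFhalf hBe)).add
      ((Integrable.mul_prod hFone hC).add (Integrable.mul_prod hFone hCe))).const_mul _
  have haesm : AEStronglyMeasurable
      (fun p : ℝ × EuclideanSpace ℝ (Fin n) =>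
        (p.1 : ℂ) ^ (2 * σ - (n : ℂ)) /
          (((p.1 ^ 2 + ‖p.2‖ ^ 2 : ℝ) : ℂ) ^ σ *
            ((p.1 ^ 2 + ‖e - p.2‖ ^ 2 : ℝ) : ℂ) ^ σ))
      (volume.restrict (Ioo (0:ℝ) 1 ×ˢ (univ : Set (EuclideanSpace ℝ (Fin n))))) := by
    have hopen : IsOpen {p : ℝ × EuclideanSpace ℝ (Fin n) | 0 < p.1} :=
      isOpen_lt continuous_const continuous_fst
    refine AEStronglyMeasurable.mono_set ?_ ((contOn σ e).aestronglyMeasurable hopen.measurableSet)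
    rintro ⟨u, v⟩ ⟨hu, -⟩
    exact hu.1
  -- a.e. avoid v = 0 and v = e
  have hnull : (volume : Measure (ℝ × EuclideanSpace ℝ (Fin n)))
      {p : ℝ × EuclideanSpace ℝ (Fin n) | p.2 = 0 ∨ p.2 = e} = 0 := by
    have hset : {p : ℝ × EuclideanSpace ℝ (Fin n) | p.2 = 0 ∨ p.2 = e}
        = (univ : Set ℝ) ×ˢ ({0, e} : Set (EuclideanSpace ℝ (Fin n))) := by
      ext p
      simp [Set.mem_prod]
    have hNT : Nontrivial (EuclideanSpace ℝ (Fin n)) :=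
      ⟨⟨e, 0, by intro h; rw [h] at he; simp at he⟩⟩
    rw [hset, Measure.volume_eq_prod, Measure.prod_prod]
    have : (volume : Measure (EuclideanSpace ℝ (Fin n))) ({0, e}) = 0 :=
      Set.Finite.measure_zero (by simp) _
    rw [this, mul_zero]
  have hae : ∀ᵐ p : ℝ × EuclideanSpace ℝ (Fin n)
      ∂(volume.restrict (Ioo (0:ℝ) 1 ×ˢ (univ : Set (EuclideanSpace ℝ (Fin n))))),
      p.2 ≠ 0 ∧ p.2 ≠ e := by
    refine ae_restrict_of_ae ?_
    rw [ae_iff]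
    refine measure_mono_null ?_ hnull
    intro p hp
    simp only [mem_setOf_eq] at hp ⊢
    tauto
  refine hg.mono' haesm ?_
  filter_upwards [ae_restrict_mem ((measurableSet_Ioo).prod MeasurableSet.univ), hae]
    with p hp hpne
  obtain ⟨hu, -⟩ := hp
  have hu0 : (0:ℝ) < p.1 := hu.1
  have hu1 : p.1 ≤ 1 := hu.2.le
  have hv0 : (0:ℝ) < ‖p.2‖ := norm_pos_iff.mpr hpne.1
  have hs0 : (0:ℝ) < ‖e - p.2‖ := by
    rw [norm_pos_iff, sub_ne_zero]
    exact fun h => hpne.2 h.symm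
  rw [norm_form hu0 σ n (sq_nonneg _) (sq_nonneg _), ← ha]
  have hrs : (1:ℝ) ≤ ‖p.2‖ + ‖e - p.2‖ := by
    have h := norm_add_le p.2 (e - p.2)
    rw [add_sub_cancel, he] at h
    exact h
  have hBnn : ∀ w, 0 ≤ B w := fun w =>
    indicator_nonneg (fun x _ => Real.rpow_nonneg (norm_nonneg x) _) w
  have hCnn : ∀ w, 0 ≤ C w := fun w =>
    indicator_nonneg (fun x _ => Real.rpow_nonneg (norm_nonneg x) _) w
  have hhalfnn : (0:ℝ) ≤ p.1 ^ (-(1/2) : ℝ) := Real.rpow_nonneg hu0.le _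
  -- notation for the four summands
  set T1 : ℝ := p.1 ^ (-(1/2) : ℝ) * B p.2 with hT1
  set T2 : ℝ := p.1 ^ (-(1/2) : ℝ) * B (e - p.2) with hT2
  set T3 : ℝ := (1:ℝ) * C p.2 with hT3
  set T4 : ℝ := (1:ℝ) * C (e - p.2) with hT4
  have hT1nn : 0 ≤ T1 := mul_nonneg hhalfnn (hBnn _)
  have hT2nn : 0 ≤ T2 := mul_nonneg hhalfnn (hBnn _)
  have hT3nn : 0 ≤ T3 := mul_nonneg zero_le_one (hCnn _)
  have hT4nn : 0 ≤ T4 := mul_nonneg zero_le_one (hCnn _)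
  have h4nn : (0:ℝ) ≤ 4 ^ a := Real.rpow_nonneg (by norm_num) _
  rcases le_or_gt (1/2 : ℝ) ‖e - p.2‖ with hs | hs
  · rcases le_or_gt ‖p.2‖ 1 with hr1 | hr1
    · -- term T1
      have hbd := coreB hn (a := a) hσ hu0 hv0 hs
      have hBv : B p.2 = ‖p.2‖ ^ (-((n : ℝ) - 1/2)) :=
        indicator_of_mem (by rwa [mem_closedBall_zero_iff]) _
      refine le_trans hbd ?_
      rw [← hBv]
      refine mul_le_mul_of_nonneg_left ?_ h4nn
      calc p.1 ^ (-(1/2) : ℝ) * B p.2 = T1 := by rw [hT1]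
        _ ≤ T1 + T2 + (T3 + T4) := by linarith
    · -- term T3
      have hbd := coreC hn (a := a) hσ hu0 hu1 hr1.le hs
      have hCv : C p.2 = ‖p.2‖ ^ (-(2 * a)) :=
        indicator_of_mem (show p.2 ∈ {w : EuclideanSpace ℝ (Fin n) | 1 ≤ ‖w‖} from hr1.le) _
      refine le_trans hbd ?_
      rw [← hCv]
      refine mul_le_mul_of_nonneg_left ?_ h4nn
      calc C p.2 = T3 := by rw [hT3, one_mul]
        _ ≤ T1 + T2 + (T3 + T4) := by linarith
  · have hr : (1:ℝ)/2 ≤ ‖p.2‖ := by linarith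
    have hcomm : (p.1 ^ 2 + ‖p.2‖ ^ 2) ^ a * (p.1 ^ 2 + ‖e - p.2‖ ^ 2) ^ a
        = (p.1 ^ 2 + ‖e - p.2‖ ^ 2) ^ a * (p.1 ^ 2 + ‖p.2‖ ^ 2) ^ a := by ring
    rcases le_or_gt ‖e - p.2‖ 1 with hs1 | hs1
    · -- term T2
      have hbd := coreB hn (a := a) hσ hu0 hs0 hr
      have hBv : B (e - p.2) = ‖e - p.2‖ ^ (-((n : ℝ) - 1/2)) :=
        indicator_of_mem (by rwa [mem_closedBall_zero_iff]) _
      rw [hcomm]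
      refine le_trans hbd ?_
      rw [← hBv]
      refine mul_le_mul_of_nonneg_left ?_ h4nn
      calc p.1 ^ (-(1/2) : ℝ) * B (e - p.2) = T2 := by rw [hT2]
        _ ≤ T1 + T2 + (T3 + T4) := by linarith
    · -- term T4
      have hbd := coreC hn (a := a) hσ hu0 hu1 hs1.le hr
      have hCv : C (e - p.2) = ‖e - p.2‖ ^ (-(2 * a)) :=
        indicator_of_mem (show e - p.2 ∈ {w : EuclideanSpace ℝ (Fin n) | 1 ≤ ‖w‖} from hs1.le) _
      rw [hcomm]
      refine le_trans hbd ?_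
      rw [← hCv]
      refine mul_le_mul_of_nonneg_left ?_ h4nn
      calc C (e - p.2) = T4 := by rw [hT4, one_mul]
        _ ≤ T1 + T2 + (T3 + T4) := by linarith

/-- Absolute convergence of the model integral `T₂(σ)` for `2 Re σ > n + 2`. -/
theorem stmt7 (n : ℕ) (hn : 1 ≤ n) (σ : ℂ) (hσ : (n : ℝ) + 2 < 2 * σ.re) :
    IntegrableOn
      (fun p : ℝ × EuclideanSpace ℝ (Fin n) =>
        (p.1 : ℂ) ^ (2 * σ - (n : ℂ)) /
          (((p.1 ^ 2 + ‖p.2‖ ^ 2 : ℝ) : ℂ) ^ σ *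
            ((p.1 ^ 2 + ‖(EuclideanSpace.single (⟨0, by omega⟩ : Fin n) (1 : ℝ)) - p.2‖ ^ 2 : ℝ) : ℂ) ^ σ))
      (Ioi (0 : ℝ) ×ˢ (univ : Set (EuclideanSpace ℝ (Fin n)))) := by
  have he : ‖EuclideanSpace.single (⟨0, by omega⟩ : Fin n) (1 : ℝ)‖ = 1 := by
    rw [EuclideanSpace.norm_single]
    norm_num
  have h1 := partB hn σ _ he hσ
  have h2 := partA hn σ (EuclideanSpace.single (⟨0, by omega⟩ : Fin n) (1 : ℝ)) hσ
  refine (h1.union h2).mono_set ?_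
  rw [← Set.union_prod]
  rintro ⟨u, v⟩ ⟨hu, hv⟩
  refine ⟨?_, hv⟩
  rcases le_or_gt 1 u with h | h
  · exact Or.inr h
  · exact Or.inl ⟨hu, h⟩
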